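/- arXiv:2210.14167 — 4 statements merged into one kernel-verified Lean document; each statement's English description precedes it below -/
import Mathlib

section
/- Let γ > 0 and let f ∈ H_γ, i.e. f : ℂ → ℂ is entire with (2/(πγ²)) ∫_ℂ |f(z)|² exp((z − conj(z))²/γ²) dA(z) < ∞. Then for every w ∈ ℂ, f(w) = (2/(πγ²)) ∫_ℂ f(z) · conj(K_γ(z,w)) · exp((z − conj(z))²/γ²) dA(z). -/
open MeasureTheory Complex

/-- The Gaussian RBF kernel `K_γ(z,w) = exp(−(z − conj w)²/γ²)`. -/
noncomputable def rbfKernel (γ : ℝ) (z w : ℂ) : ℂ :=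
  Complex.exp (-(z - (starRingEnd ℂ) w) ^ 2 / (γ : ℂ) ^ 2)

/-- Squared-norm density of the RBF space `H_γ`:
`(2/(πγ²)) |f z|² exp((z − conj z)²/γ²)`, where
`exp((z − conj z)²/γ²) = exp(−4 (Im z)²/γ²)`. -/
noncomputable def rbfDensity (γ : ℝ) (f : ℂ → ℂ) (z : ℂ) : ℝ :=
  (2 / (Real.pi * γ ^ 2)) * ‖f z‖ ^ 2 * Real.exp (-(4 * z.im ^ 2) / γ ^ 2)

open MeasureTheory Complex Set Real intervalIntegral

section AuxRBF

open MeasureTheory Complex Set intervalIntegral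

lemma circle_mean (φ : ℂ → ℂ) (hφ : Differentiable ℂ φ) {r : ℝ} (hr : 0 < r) :
    ∫ θ in Set.Ioo (-Real.pi) Real.pi, φ (circleMap 0 r θ) = (2 * Real.pi : ℝ) • φ 0 := by
  have key : (∮ z in C(0, r), (z - 0)⁻¹ • φ z) = (2 * Real.pi * I : ℂ) • φ 0 :=
    (hφ.differentiableOn (s := Metric.closedBall 0 r)).circleIntegral_sub_inv_smul
      (Metric.mem_ball_self hr)
  have h1 : (∮ z in C(0, r), (z - 0)⁻¹ • φ z)
      = I * ∫ θ in (0:ℝ)..(2*Real.pi), φ (circleMap 0 r θ) := by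
    rw [circleIntegral, ← intervalIntegral.integral_const_mul]
    refine intervalIntegral.integral_congr fun θ _ => ?_
    have hne : circleMap 0 r θ ≠ 0 := by
      simpa using circleMap_ne_center (c := 0) hr.ne' (θ := θ)
    simp only [deriv_circleMap, sub_zero, smul_eq_mul]
    field_simp
  have h2 : ∫ θ in (0:ℝ)..(2*Real.pi), φ (circleMap 0 r θ) = (2 * Real.pi : ℝ) • φ 0 := by
    have : I * ∫ θ in (0:ℝ)..(2*Real.pi), φ (circleMap 0 r θ)
        = I * ((2 * Real.pi : ℝ) • φ 0) := by
      rw [← h1, key]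
      simp [smul_smul]
      ring_nf
    exact mul_left_cancel₀ I_ne_zero this
  have hper : Function.Periodic (fun θ => φ (circleMap 0 r θ)) (2 * Real.pi) :=
    fun θ => by simp [periodic_circleMap 0 r θ]
  have h3 : ∫ θ in (-Real.pi)..Real.pi, φ (circleMap 0 r θ)
      = ∫ θ in (0:ℝ)..(2*Real.pi), φ (circleMap 0 r θ) := by
    have := hper.intervalIntegral_add_eq (-Real.pi) 0
    rw [zero_add] at this
    convert this using 2
    ring
  rw [← MeasureTheory.integral_Ioc_eq_integral_Ioo,
    ← intervalIntegral.integral_of_le (by linarith [Real.pi_pos] : -Real.pi ≤ Real.pi), h3, h2]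

lemma integrableOn_polar_target (F : ℂ → ℂ) (hF : Integrable F) :
    IntegrableOn (fun p : ℝ × ℝ => p.1 • F (Complex.polarCoord.symm p)) polarCoord.target := by
  set G : ℝ × ℝ → ℂ := F ∘ Complex.measurableEquivRealProd.symm with hG
  have hGi : Integrable G := by
    rw [hG, (Complex.volume_preserving_equiv_real_prod.symm).integrable_comp_emb
      Complex.measurableEquivRealProd.symm.measurableEmbedding]
    exact hF
  set B : ℝ × ℝ → ℝ × ℝ →L[ℝ] ℝ × ℝ := fun p =>
    LinearMap.toContinuousLinearMap (Matrix.toLin (Module.Basis.finTwoProd ℝ) (Module.Basis.finTwoProd ℝ)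
      !![Real.cos p.2, -p.1 * Real.sin p.2; Real.sin p.2, p.1 * Real.cos p.2]) with hB
  have B_det : ∀ p, (B p).det = p.1 := by
    intro p
    conv_rhs => rw [← one_mul p.1, ← Real.cos_sq_add_sin_sq p.2]
    simp only [hB, neg_mul, LinearMap.det_toContinuousLinearMap, LinearMap.det_toLin,
      Matrix.det_fin_two_of, sub_neg_eq_add]
    ring
  have h1 : IntegrableOn G (polarCoord.symm '' polarCoord.target) := hGi.integrableOn
  have h2 := (integrableOn_image_iff_integrableOn_abs_det_fderiv_smul volume
      polarCoord.open_target.measurableSet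
      (fun p _ => (hasFDerivAt_polarCoord_symm p).hasFDerivWithinAt)
      polarCoord.symm.injOn G).1 h1
  refine (h2.congr_fun (fun p hp => ?_) polarCoord.open_target.measurableSet)
  beta_reduce
  rw [show (fderivPolarCoordSymm p).det = p.1 from B_det p, abs_of_pos hp.1]
  rfl

open MeasureTheory Complex Set Real

lemma integral_entire_mul_gaussian (φ : ℂ → ℂ) (hφ : Differentiable ℂ φ) {c : ℝ} (hc : 0 < c)
    (hint : Integrable fun u : ℂ => φ u * (Real.exp (-c * ‖u‖ ^ 2) : ℂ)) :
    ∫ u : ℂ, φ u * (Real.exp (-c * ‖u‖ ^ 2) : ℂ) = ((Real.pi / c : ℝ) : ℂ) * φ 0 := by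
  set F : ℂ → ℂ := fun u => φ u * (Real.exp (-c * ‖u‖ ^ 2) : ℂ) with hF
  have hIO : IntegrableOn (fun p : ℝ × ℝ => p.1 • F (Complex.polarCoord.symm p))
      polarCoord.target := integrableOn_polar_target F hint
  have hFsymm : ∀ p : ℝ × ℝ, F (Complex.polarCoord.symm p)
      = φ (circleMap 0 p.1 p.2) * (Real.exp (-c * p.1 ^ 2) : ℂ) := by
    intro p
    have h1 : Complex.polarCoord.symm p = circleMap 0 p.1 p.2 := by
      rw [Complex.polarCoord_symm_apply, circleMap]
      push_cast
      rw [Complex.exp_mul_I]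
      push_cast
      ring
    have h2 : ‖Complex.polarCoord.symm p‖ ^ 2 = p.1 ^ 2 := by
      rw [Complex.norm_polarCoord_symm]
      exact sq_abs p.1
    rw [hF]
    simp only [h1] at h2 ⊢
    rw [h2]
  have htarget : polarCoord.target = Set.Ioi (0:ℝ) ×ˢ Set.Ioo (-Real.pi) Real.pi := rfl
  calc
    ∫ u : ℂ, F u = ∫ p in polarCoord.target, p.1 • F (Complex.polarCoord.symm p) :=
      (Complex.integral_comp_polarCoord_symm F).symm
    _ = ∫ r in Set.Ioi (0:ℝ), ∫ θ in Set.Ioo (-Real.pi) Real.pi,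
          (r : ℝ) • F (Complex.polarCoord.symm (r, θ)) := by
      rw [htarget] at hIO ⊢
      rw [show (volume : Measure (ℝ × ℝ)) = volume.prod volume from Measure.volume_eq_prod ℝ ℝ]
        at hIO ⊢
      exact MeasureTheory.setIntegral_prod _ hIO
    _ = ∫ r in Set.Ioi (0:ℝ), (r : ℂ) * Complex.exp (-(c:ℂ) * (r:ℂ) ^ 2)
          * ((2 * Real.pi : ℝ) • φ 0) := by
      refine setIntegral_congr_fun measurableSet_Ioi fun r hr => ?_
      have : ∀ θ : ℝ, (r : ℝ) • F (Complex.polarCoord.symm (r, θ))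
          = (Real.exp (-c * r ^ 2) * r : ℝ) • φ (circleMap 0 r θ) := by
        intro θ
        rw [hFsymm (r, θ)]
        simp [smul_eq_mul]
        push_cast
        ring
      simp only [this, MeasureTheory.integral_smul]
      rw [circle_mean φ hφ hr]
      rw [smul_smul, real_smul, real_smul]
      push_cast [Complex.ofReal_exp]
      ring
    _ = (∫ r in Set.Ioi (0:ℝ), (r : ℂ) * Complex.exp (-(c:ℂ) * (r:ℂ) ^ 2))
          * ((2 * Real.pi : ℝ) • φ 0) := MeasureTheory.integral_mul_const _ _
    _ = ((Real.pi / c : ℝ) : ℂ) * φ 0 := by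
      rw [integral_mul_cexp_neg_mul_sq (by simpa using hc)]
      rw [real_smul]
      push_cast
      have hc' : (c : ℂ) ≠ 0 := by exact_mod_cast hc.ne'
      field_simp


lemma integrable_gauss {a : ℝ} (ha : 0 < a) :
    Integrable fun u : ℂ => Real.exp (-a * ‖u‖ ^ 2) := by
  rw [← (Complex.volume_preserving_equiv_real_prod.symm).integrable_comp_emb
    Complex.measurableEquivRealProd.symm.measurableEmbedding]
  have : ((fun u : ℂ => Real.exp (-a * ‖u‖ ^ 2)) ∘ Complex.measurableEquivRealProd.symm)
      = fun p : ℝ × ℝ => Real.exp (-a * p.1 ^ 2) * Real.exp (-a * p.2 ^ 2) := by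
    ext p
    simp only [Function.comp_apply, ← Real.exp_add]
    congr 1
    have : ‖Complex.measurableEquivRealProd.symm p‖ ^ 2 = p.1 ^ 2 + p.2 ^ 2 := by
      rw [Complex.sq_norm]
      rcases p with ⟨x, y⟩
      rw [show Complex.measurableEquivRealProd.symm (x, y) = Complex.equivRealProd.symm (x, y)
        from rfl]
      simp [Complex.normSq_apply, Complex.equivRealProd]
      ring
    rw [this]
    ring
  rw [this, show (volume : Measure (ℝ × ℝ)) = volume.prod volume from Measure.volume_eq_prod ℝ ℝ]
  exact (integrable_exp_neg_mul_sq ha).mul_prod (integrable_exp_neg_mul_sq ha)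

lemma main_integrable (γ : ℝ) (hγ : 0 < γ) (f : ℂ → ℂ)
    (hf : Differentiable ℂ f)
    (hf2 : (∫⁻ z : ℂ, ENNReal.ofReal (rbfDensity γ f z)) < ⊤) (w : ℂ) :
    Integrable fun u : ℂ =>
      (f (w + u) * Complex.exp ((u ^ 2 + 2 * (w - (starRingEnd ℂ) w) * u) / (γ : ℂ) ^ 2)) *
        (Real.exp (-(2 / γ ^ 2) * ‖u‖ ^ 2) : ℂ) := by
  have hγ2 : (γ : ℝ) ^ 2 ≠ 0 := by positivity
  set A : ℂ → ℝ := fun u => ‖f (w + u)‖ * Real.exp (-(2 / γ ^ 2) * (w + u).im ^ 2) with hA_def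
  set B : ℂ → ℝ :=
    fun u => Real.exp (2 * w.im ^ 2 / γ ^ 2) * Real.exp (-(1 / γ ^ 2) * ‖u‖ ^ 2) with hB_def
  have hnorm_sq : ∀ u : ℂ, ‖u‖ ^ 2 = u.re ^ 2 + u.im ^ 2 := fun u => by
    rw [Complex.sq_norm, Complex.normSq_apply]; ring
  have hnorm : ∀ u : ℂ,
      ‖(f (w + u) * Complex.exp ((u ^ 2 + 2 * (w - (starRingEnd ℂ) w) * u) / (γ : ℂ) ^ 2)) *
        (Real.exp (-(2 / γ ^ 2) * ‖u‖ ^ 2) : ℂ)‖ = A u * B u := by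
    intro u
    rw [norm_mul, norm_mul, Complex.norm_exp,
      Complex.norm_real, Real.norm_eq_abs, abs_of_pos (Real.exp_pos _)]
    rw [hA_def, hB_def]
    simp only [mul_assoc, ← Real.exp_add]
    congr 2
    have h1 : ((γ : ℂ) ^ 2) = ((γ ^ 2 : ℝ) : ℂ) := by push_cast; ring
    rw [h1, Complex.div_ofReal_re]
    rw [hnorm_sq u]
    simp only [Complex.add_re, Complex.mul_re, Complex.mul_im, Complex.sub_re, Complex.sub_im,
      Complex.conj_re, Complex.conj_im, Complex.add_im, pow_two, Complex.ofReal_re,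
      Complex.ofReal_im, Complex.re_ofNat, Complex.im_ofNat]
    field_simp
    ring
  have hAcont : Continuous A := by
    apply Continuous.mul
    · exact (hf.continuous.comp (continuous_const.add continuous_id)).norm
    · exact Real.continuous_exp.comp (by fun_prop)
  have hBcont : Continuous B := by fun_prop
  -- Integrability of A ^ 2 from the hypothesis hf2
  set D : ℂ → ℝ := fun z => ‖f z‖ ^ 2 * Real.exp (-(4 * z.im ^ 2) / γ ^ 2) with hD_def
  have hDcont : Continuous D := by
    apply Continuous.mul
    · exact (hf.continuous.norm).pow 2
    · exact Real.continuous_exp.comp (by fun_prop)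
  have hC : (0 : ℝ) < 2 / (Real.pi * γ ^ 2) := by positivity
  have hlint : (∫⁻ z : ℂ, ENNReal.ofReal (D z)) < ⊤ := by
    have heq : ∀ z : ℂ, ENNReal.ofReal (rbfDensity γ f z)
        = ENNReal.ofReal (2 / (Real.pi * γ ^ 2)) * ENNReal.ofReal (D z) := by
      intro z
      rw [rbfDensity, mul_assoc, ENNReal.ofReal_mul hC.le]
    simp_rw [heq] at hf2
    rw [lintegral_const_mul' _ _ ENNReal.ofReal_ne_top] at hf2
    by_contra h
    rw [not_lt, top_le_iff] at h
    rw [h, ENNReal.mul_top (ENNReal.ofReal_pos.2 hC).ne'] at hf2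
    exact absurd hf2 (lt_irrefl ⊤)
  have hD : Integrable D := by
    refine ⟨hDcont.aestronglyMeasurable, ?_⟩
    rw [hasFiniteIntegral_iff_ofReal (Filter.Eventually.of_forall fun z => by positivity)]
    exact hlint
  have hDW : Integrable fun u : ℂ => D (w + u) := by
    have := ((measurePreserving_add_left (volume : Measure ℂ) w).integrable_comp_emb
      (MeasurableEquiv.addLeft w).measurableEmbedding (g := D)).2 hD
    exact this
  have hA2 : Integrable fun u : ℂ => A u ^ 2 := by
    refine hDW.congr (Filter.EventuallyEq.of_eq (funext fun u => ?_))
    rw [hA_def, hD_def]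
    simp only [mul_pow, ← Real.exp_nat_mul]
    congr 1
    push_cast
    field_simp
    ring
  have hA : MemLp A 2 (volume : Measure ℂ) :=
    (memLp_two_iff_integrable_sq hAcont.aestronglyMeasurable).2 hA2
  have hB2 : Integrable fun u : ℂ => B u ^ 2 := by
    have hpos : (0 : ℝ) < 2 / γ ^ 2 := by positivity
    have := (integrable_gauss hpos).const_mul (Real.exp (2 * w.im ^ 2 / γ ^ 2) ^ 2)
    refine this.congr (Filter.EventuallyEq.of_eq (funext fun u => ?_))
    rw [hB_def]
    simp only [mul_pow, ← Real.exp_nat_mul]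
    congr 2
    push_cast
    field_simp
  have hB : MemLp B 2 (volume : Measure ℂ) :=
    (memLp_two_iff_integrable_sq hBcont.aestronglyMeasurable).2 hB2
  have hAB : Integrable fun u : ℂ => A u * B u := by
    have h1 : MemLp (A • B) 1 (volume : Measure ℂ) :=
      hB.smul hA (hpqr := ⟨by rw [inv_one]; exact ENNReal.inv_two_add_inv_two⟩)
    exact memLp_one_iff_integrable.1 h1
  refine hAB.mono' ?_ (Filter.Eventually.of_forall fun u => (hnorm u).le)
  apply Continuous.aestronglyMeasurable
  apply Continuous.mul
  · apply Continuous.mul (hf.continuous.comp (continuous_const.add continuous_id))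
    exact Complex.continuous_exp.comp (by fun_prop)
  · fun_prop

end AuxRBF

theorem rbf_reproducing_property (γ : ℝ) (hγ : 0 < γ) (f : ℂ → ℂ)
    (hf : Differentiable ℂ f)
    (hf2 : (∫⁻ z : ℂ, ENNReal.ofReal (rbfDensity γ f z)) < ⊤) (w : ℂ) :
    f w = ((2 / (Real.pi * γ ^ 2) : ℝ) : ℂ) *
      ∫ z : ℂ, f z * (starRingEnd ℂ) (rbfKernel γ z w) *
        (Real.exp (-(4 * z.im ^ 2) / γ ^ 2) : ℂ) := by
  have hγ2 : (γ : ℝ) ^ 2 ≠ 0 := by positivity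
  have hγc : ((γ : ℂ)) ^ 2 ≠ 0 := by
    simpa using fun h => hγ.ne' (by exact_mod_cast h)
  have hc : (0 : ℝ) < 2 / γ ^ 2 := by positivity
  set φ : ℂ → ℂ := fun u =>
    f (w + u) * Complex.exp ((u ^ 2 + 2 * (w - (starRingEnd ℂ) w) * u) / (γ : ℂ) ^ 2) with hφ_def
  have hφdiff : Differentiable ℂ φ := by
    apply Differentiable.mul
    · exact hf.comp ((differentiable_const w).add differentiable_id)
    · exact Complex.differentiable_exp.comp
        (((differentiable_id.pow 2).add ((differentiable_const _).mul differentiable_id)).div_const _)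
  have hint := main_integrable γ hγ f hf hf2 w
  have key := integral_entire_mul_gaussian φ hφdiff hc hint
  have hφ0 : φ 0 = f w := by
    rw [hφ_def]
    simp
  have hpt : ∀ u : ℂ, f (w + u) * (starRingEnd ℂ) (rbfKernel γ (w + u) w) *
      (Real.exp (-(4 * (w + u).im ^ 2) / γ ^ 2) : ℂ)
      = φ u * (Real.exp (-(2 / γ ^ 2) * ‖u‖ ^ 2) : ℂ) := by
    intro u
    have him : ∀ z : ℂ, ((z.im : ℂ)) ^ 2 = -((z - (starRingEnd ℂ) z) ^ 2) / 4 := by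
      intro z
      rw [Complex.sub_conj, mul_pow, Complex.I_sq]
      push_cast
      ring
    have hnu : ((‖u‖ ^ 2 : ℝ) : ℂ) = u * (starRingEnd ℂ) u := by
      rw [Complex.mul_conj, Complex.normSq_eq_norm_sq]
    rw [hφ_def, rbfKernel, ← Complex.exp_conj, Complex.ofReal_exp, Complex.ofReal_exp,
      mul_assoc, ← Complex.exp_add, mul_assoc, ← Complex.exp_add]
    congr 2
    push_cast
    rw [him (w + u)]
    simp only [map_div₀, map_neg, map_pow, map_sub, map_add, Complex.conj_conj,
      Complex.conj_ofReal]
    rw [show ((‖u‖:ℝ):ℂ) ^ 2 = u * (starRingEnd ℂ) u from by rw [← Complex.ofReal_pow, hnu]]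
    field_simp
    try ring
  have hshift := MeasureTheory.integral_add_left_eq_self (μ := (volume : Measure ℂ))
    (fun z : ℂ => f z * (starRingEnd ℂ) (rbfKernel γ z w) *
      (Real.exp (-(4 * z.im ^ 2) / γ ^ 2) : ℂ)) w
  rw [← hshift]
  simp only [hpt]
  rw [key, hφ0, ← mul_assoc, ← Complex.ofReal_mul,
    show (2 / (Real.pi * γ ^ 2) : ℝ) * (Real.pi / (2 / γ ^ 2)) = 1 by
      field_simp]
  simp
end

section
/- Let γ > 0. For all z, w ∈ ℂ one has (2/(πγ²)) ∫_ℂ conj(K_γ(u,w)) · K_γ(u,z) · exp((u − conj(u))²/γ²) dA(u) = K_γ(w,z); that is, the H_γ-inner product of the kernel sections K_γ(·,w) and K_γ(·,z) equals K_γ(w,z). -/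
open MeasureTheory Complex

theorem rbf_kernel_inner_product (γ : ℝ) (hγ : 0 < γ) (z w : ℂ) :
    ((2 / (Real.pi * γ ^ 2) : ℝ) : ℂ) *
      ∫ u : ℂ, (starRingEnd ℂ) (rbfKernel γ u w) * rbfKernel γ u z *
        (Real.exp (-(4 * u.im ^ 2) / γ ^ 2) : ℂ) = rbfKernel γ w z := by
  have hγ0 : (γ : ℂ) ≠ 0 := Complex.ofReal_ne_zero.2 hγ.ne'
  set B : ℂ := -2 / (γ : ℂ) ^ 2 with hBdef
  set C₁ : ℂ := 2 * (w + (starRingEnd ℂ) z) / (γ : ℂ) ^ 2 with hC1def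
  set D₁ : ℂ := -(w ^ 2 + ((starRingEnd ℂ) z) ^ 2) / (γ : ℂ) ^ 2 with hD1def
  set C₂ : ℂ := -2 * I * (w - (starRingEnd ℂ) z) / (γ : ℂ) ^ 2 with hC2def
  have hBre : B.re < 0 := by
    have : B = ((-2 / γ ^ 2 : ℝ) : ℂ) := by rw [hBdef]; push_cast; ring
    rw [this, Complex.ofReal_re]
    have : (0:ℝ) < γ ^ 2 := by positivity
    exact div_neg_of_neg_of_pos (by norm_num) this
  have hB0 : B ≠ 0 := by
    intro h; rw [h] at hBre; simp at hBre
  have key : ∀ u : ℂ, (starRingEnd ℂ) (rbfKernel γ u w) * rbfKernel γ u z *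
        (Real.exp (-(4 * u.im ^ 2) / γ ^ 2) : ℂ) =
      Complex.exp (B * (u.re : ℂ) ^ 2 + C₁ * (u.re : ℂ) + D₁) *
      Complex.exp (B * (u.im : ℂ) ^ 2 + C₂ * (u.im : ℂ) + 0) := by
    intro u
    obtain ⟨x, y⟩ := u
    have hre : (Complex.mk x y).re = x := rfl
    have him : (Complex.mk x y).im = y := rfl
    have hu : (Complex.mk x y : ℂ) = (x : ℂ) + (y : ℂ) * I := Complex.mk_eq_add_mul_I x y
    rw [hre, him, rbfKernel, rbfKernel, ← Complex.exp_conj, Complex.ofReal_exp,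
      ← Complex.exp_add, ← Complex.exp_add, ← Complex.exp_add]
    congr 1
    simp only [map_div₀, map_neg, map_pow, map_sub, Complex.conj_conj, Complex.conj_ofReal, hu,
      map_add, map_mul, Complex.conj_I]
    push_cast
    linear_combination (-2 * (y:ℂ)^2 / (γ:ℂ)^2) * Complex.I_sq
  simp_rw [key]
  have hmp := (Complex.volume_preserving_equiv_real_prod).integral_comp
    Complex.measurableEquivRealProd.measurableEmbedding
    (fun p : ℝ × ℝ => Complex.exp (B * (p.1 : ℂ) ^ 2 + C₁ * (p.1 : ℂ) + D₁) *
      Complex.exp (B * (p.2 : ℂ) ^ 2 + C₂ * (p.2 : ℂ) + 0))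
  simp only [Complex.measurableEquivRealProd_apply] at hmp
  rw [show (∫ u : ℂ, Complex.exp (B * (u.re : ℂ) ^ 2 + C₁ * (u.re : ℂ) + D₁) *
      Complex.exp (B * (u.im : ℂ) ^ 2 + C₂ * (u.im : ℂ) + 0)) =
      ∫ p : ℝ × ℝ, Complex.exp (B * (p.1 : ℂ) ^ 2 + C₁ * (p.1 : ℂ) + D₁) *
      Complex.exp (B * (p.2 : ℂ) ^ 2 + C₂ * (p.2 : ℂ) + 0) from hmp]
  rw [Measure.volume_eq_prod,
    integral_prod_mul (f := fun x : ℝ => Complex.exp (B * (x:ℂ)^2 + C₁ * (x:ℂ) + D₁))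
      (g := fun y : ℝ => Complex.exp (B * (y:ℂ)^2 + C₂ * (y:ℂ) + 0)),
    integral_cexp_quadratic hBre C₁ D₁,
    integral_cexp_quadratic hBre C₂ 0]
  have hπB : ((Real.pi : ℂ) / -B) ≠ 0 := by
    apply div_ne_zero
    · exact_mod_cast Real.pi_ne_zero
    · simpa using hB0
  have hsq : ((Real.pi : ℂ) / -B) ^ (1/2 : ℂ) * ((Real.pi : ℂ) / -B) ^ (1/2 : ℂ)
      = (Real.pi : ℂ) / -B := by
    rw [← Complex.cpow_add _ _ hπB]
    norm_num
  rw [show ((Real.pi : ℂ) / -B) ^ (1/2 : ℂ) * Complex.exp (D₁ - C₁ ^ 2 / (4 * B)) *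
      (((Real.pi : ℂ) / -B) ^ (1/2 : ℂ) * Complex.exp (0 - C₂ ^ 2 / (4 * B))) =
      (((Real.pi : ℂ) / -B) ^ (1/2 : ℂ) * ((Real.pi : ℂ) / -B) ^ (1/2 : ℂ)) *
      (Complex.exp (D₁ - C₁ ^ 2 / (4 * B)) * Complex.exp (0 - C₂ ^ 2 / (4 * B))) by ring,
    hsq, ← Complex.exp_add]
  have hπ0 : (Real.pi : ℂ) ≠ 0 := by exact_mod_cast Real.pi_ne_zero
  have hexp : (D₁ - C₁ ^ 2 / (4 * B)) + (0 - C₂ ^ 2 / (4 * B)) =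
      -(w - (starRingEnd ℂ) z) ^ 2 / (γ : ℂ) ^ 2 := by
    rw [hD1def, hC1def, hC2def, hBdef]
    simp only [div_pow, mul_pow, Complex.I_sq]
    have h10 : (γ:ℂ)^10 * ((γ:ℂ))⁻¹^10 = 1 := by
      rw [inv_pow, mul_inv_cancel₀ (pow_ne_zero _ hγ0)]
    field_simp
    ring
  rw [hexp, rbfKernel]
  rw [show (((2 / (Real.pi * γ ^ 2) : ℝ)) : ℂ) = 2 / ((Real.pi : ℂ) * (γ:ℂ) ^ 2) by push_cast; ring]
  rw [show ((Real.pi : ℂ) / -B) = (Real.pi : ℂ) * (γ:ℂ)^2 / 2 by rw [hBdef]; field_simp]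
  rw [show 2 / ((Real.pi : ℂ) * (γ:ℂ) ^ 2) * ((Real.pi : ℂ) * (γ:ℂ)^2 / 2 *
      Complex.exp (-(w - (starRingEnd ℂ) z) ^ 2 / (γ : ℂ) ^ 2)) =
      ((Real.pi : ℂ) * (γ:ℂ)^2) / ((Real.pi : ℂ) * (γ:ℂ) ^ 2) *
      Complex.exp (-(w - (starRingEnd ℂ) z) ^ 2 / (γ : ℂ) ^ 2) by ring,
    div_self (by exact mul_ne_zero hπ0 (pow_ne_zero 2 hγ0)), one_mul]
end

section
/- Let γ > 0 and let f ∈ H_γ. Then for every z = x + iy ∈ ℂ one has |f(z)| ≤ exp(2y²/γ²) · ‖f‖_{H_γ}. In particular, for every real x, |f(x)| ≤ ‖f‖_{H_γ}. -/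
open MeasureTheory Complex

/-- The norm of the RBF space `H_γ`. -/
noncomputable def rbfNorm (γ : ℝ) (f : ℂ → ℂ) : ℝ :=
  Real.sqrt ((∫⁻ z : ℂ, ENNReal.ofReal (rbfDensity γ f z)).toReal)

open Set Filter
open scoped Real ENNReal

section auxiliary

theorem RBF.lintegral_comp_polarCoord_symm (g : ℝ × ℝ → ℝ≥0∞) :
    (∫⁻ p in polarCoord.target, ENNReal.ofReal p.1 * g (polarCoord.symm p)) = ∫⁻ p, g p := by
  set B : ℝ × ℝ → ℝ × ℝ →L[ℝ] ℝ × ℝ := fun p =>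
    LinearMap.toContinuousLinearMap (Matrix.toLin (Module.Basis.finTwoProd ℝ) (Module.Basis.finTwoProd ℝ)
      !![Real.cos p.2, -p.1 * Real.sin p.2; Real.sin p.2, p.1 * Real.cos p.2])
  have A : ∀ p ∈ polarCoord.symm.source, HasFDerivAt polarCoord.symm (B p) p := fun p _ =>
    hasFDerivAt_polarCoord_symm p
  have B_det : ∀ p, (B p).det = p.1 := by
    intro p
    conv_rhs => rw [← one_mul p.1, ← Real.cos_sq_add_sin_sq p.2]
    simp only [B, neg_mul, LinearMap.det_toContinuousLinearMap, LinearMap.det_toLin,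
      Matrix.det_fin_two_of, sub_neg_eq_add]
    ring
  symm
  calc
    ∫⁻ p, g p = ∫⁻ p in polarCoord.source, g p := by
      rw [← setLIntegral_univ]
      exact (setLIntegral_congr polarCoord_source_ae_eq_univ.symm)
    _ = ∫⁻ p in polarCoord.target, ENNReal.ofReal |(B p).det| * g (polarCoord.symm p) := by
      rw [← polarCoord.symm_image_target_eq_source]
      exact lintegral_image_eq_lintegral_abs_det_fderiv_mul volume
        polarCoord.open_target.measurableSet (fun p hp => (A p hp).hasFDerivWithinAt)
        polarCoord.symm.injOn g
    _ = ∫⁻ p in polarCoord.target, ENNReal.ofReal p.1 * g (polarCoord.symm p) := by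
      refine setLIntegral_congr_fun polarCoord.open_target.measurableSet
        (fun x hx => ?_)
      rw [B_det, abs_of_pos hx.1]

theorem RBF.lintegral_comp_complex_polarCoord_symm (g : ℂ → ℝ≥0∞) :
    (∫⁻ p in polarCoord.target, ENNReal.ofReal p.1 * g (Complex.polarCoord.symm p))
      = ∫⁻ z, g z := by
  rw [← (Complex.volume_preserving_equiv_real_prod.symm).lintegral_comp_emb
    Complex.measurableEquivRealProd.symm.measurableEmbedding,
    ← RBF.lintegral_comp_polarCoord_symm
      (fun p : ℝ × ℝ => g (Complex.measurableEquivRealProd.symm p))]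
  rfl

lemma RBF.meanValue (g : ℂ → ℂ) (hg : Differentiable ℂ g) {R : ℝ} (hR : 0 < R) :
    (2 * Real.pi : ℂ) * g 0 = ∫ θ in (0:ℝ)..(2 * Real.pi), g (circleMap 0 R θ) := by
  have h := ((hg.differentiableOn (s := Metric.closedBall 0 R)).circleIntegral_sub_inv_smul
      (Metric.mem_ball_self hR))
  rw [circleIntegral] at h
  simp only [deriv_circleMap, sub_zero, smul_smul, smul_eq_mul] at h
  have h2 : ∀ θ : ℝ, circleMap 0 R θ * I * ((circleMap 0 R θ)⁻¹ * g (circleMap 0 R θ))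
      = I * g (circleMap 0 R θ) := by
    intro θ
    have hne : circleMap 0 R θ ≠ 0 := by
      simpa using circleMap_ne_center (c := 0) (ne_of_gt hR) (θ := θ)
    field_simp
  simp only [h2] at h
  rw [intervalIntegral.integral_const_mul] at h
  have : I * (2 * (Real.pi : ℂ) * g 0) = I * ∫ θ in (0:ℝ)..(2 * Real.pi), g (circleMap 0 R θ) := by
    rw [h]; ring
  exact mul_left_cancel₀ I_ne_zero this

lemma RBF.circleMap_eq_polar (r θ : ℝ) :
    circleMap 0 r θ = Complex.polarCoord.symm (r, θ) := by
  simp [circleMap, Complex.exp_mul_I]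

lemma RBF.realMV (g : ℂ → ℂ) (hg : Differentiable ℂ g) {r : ℝ} (hr : 0 < r) :
    2 * Real.pi * ‖g 0‖ ^ 2 ≤ ∫ θ in Ioo (-Real.pi) Real.pi,
      ‖g (Complex.polarCoord.symm (r, θ))‖ ^ 2 := by
  set H : ℂ → ℂ := fun w => g w * g w with hH
  have hHd : Differentiable ℂ H := hg.mul hg
  have hmv := RBF.meanValue H hHd hr
  have hper : (fun θ : ℝ => H (circleMap 0 r θ)).Periodic (2 * Real.pi) :=
    (periodic_circleMap 0 r).comp H
  have hshift := hper.intervalIntegral_add_eq (-Real.pi) 0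
  have hval : ∫ θ in (-Real.pi)..Real.pi, H (circleMap 0 r θ)
      = (2 * Real.pi : ℂ) * H 0 := by
    rw [hmv]
    have h1 : ∫ θ in (-Real.pi)..Real.pi, H (circleMap 0 r θ)
        = ∫ θ in (-Real.pi)..(-Real.pi + 2 * Real.pi), H (circleMap 0 r θ) := by
      congr 1
      ring
    rw [h1, hshift]
    norm_num
  have hnorm : ‖(2 * Real.pi : ℂ) * H 0‖ = 2 * Real.pi * ‖g 0‖ ^ 2 := by
    have h2 : ‖(2 * Real.pi : ℂ) * H 0‖ = 2 * Real.pi * (‖g 0‖ * ‖g 0‖) := by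
      simp [hH, norm_mul, abs_of_pos Real.pi_pos]
    rw [h2]; ring
  calc 2 * Real.pi * ‖g 0‖ ^ 2 = ‖∫ θ in (-Real.pi)..Real.pi, H (circleMap 0 r θ)‖ := by
        rw [hval, hnorm]
    _ ≤ ∫ θ in (-Real.pi)..Real.pi, ‖H (circleMap 0 r θ)‖ :=
        intervalIntegral.norm_integral_le_integral_norm (by linarith [Real.pi_pos])
    _ = ∫ θ in Ioo (-Real.pi) Real.pi, ‖g (Complex.polarCoord.symm (r, θ))‖ ^ 2 := by
        rw [intervalIntegral.integral_of_le (by linarith [Real.pi_pos]),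
          integral_Ioc_eq_integral_Ioo]
        refine setIntegral_congr_fun measurableSet_Ioo fun θ _ => ?_
        rw [RBF.circleMap_eq_polar, hH]
        simp [norm_mul, sq]

lemma RBF.integral_id_mul_exp_neg_mul_sq {α : ℝ} (hα : 0 < α) :
    ∫ r in Ioi (0:ℝ), r * Real.exp (-α * r ^ 2) = (2 * α)⁻¹ := by
  have hα' : α ≠ 0 := ne_of_gt hα
  have A : ∀ x : ℝ, HasDerivAt (fun x : ℝ => -(2 * α)⁻¹ * Real.exp (-α * x ^ 2))
      (x * Real.exp (-α * x ^ 2)) x := by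
    intro x
    refine (((hasDerivAt_pow 2 x).const_mul (-α)).exp.const_mul (-(2 * α)⁻¹)).congr_deriv ?_
    field_simp
    norm_num
  have B : Filter.Tendsto (fun y : ℝ => -(2 * α)⁻¹ * Real.exp (-α * y ^ 2))
      Filter.atTop (nhds (-(2 * α)⁻¹ * 0)) := by
    refine Filter.Tendsto.const_mul _ ?_
    refine Real.tendsto_exp_atBot.comp ?_
    exact (tendsto_pow_atTop two_ne_zero).const_mul_atTop_of_neg (neg_lt_zero.2 hα)
  have hint := integral_Ioi_of_hasDerivAt_of_tendsto' (fun x (_ : x ∈ Ici (0:ℝ)) => A x)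
    (integrable_mul_exp_neg_mul_sq hα).integrableOn B
  rw [hint]
  norm_num

lemma RBF.fockBound (α : ℝ) (hα : 0 < α) (G : ℂ → ℂ) (hG : Differentiable ℂ G) :
    ENNReal.ofReal (Real.pi / α * ‖G 0‖ ^ 2)
      ≤ ∫⁻ w : ℂ, ENNReal.ofReal (‖G w‖ ^ 2 * Real.exp (-α * ‖w‖ ^ 2)) := by
  set D : ℂ → ℝ := fun w => ‖G w‖ ^ 2 * Real.exp (-α * ‖w‖ ^ 2) with hD
  have hDcont : Continuous D := by
    apply Continuous.mul
    · exact (hG.continuous.norm.pow 2)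
    · exact Real.continuous_exp.comp (by fun_prop)
  have hsymm : Continuous fun p : ℝ × ℝ => Complex.polarCoord.symm p := by
    have : (fun p : ℝ × ℝ => Complex.polarCoord.symm p)
        = fun p : ℝ × ℝ => (p.1 : ℂ) * (Real.cos p.2 + Real.sin p.2 * Complex.I) := by
      funext p; exact Complex.polarCoord_symm_apply p
    rw [this]; fun_prop
  have hmeas : Measurable fun p : ℝ × ℝ =>
      ENNReal.ofReal p.1 * ENNReal.ofReal (D (Complex.polarCoord.symm p)) :=
    (measurable_fst.ennreal_ofReal).mul
      ((hDcont.comp hsymm).measurable.ennreal_ofReal)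
  have key : ∀ r ∈ Ioi (0:ℝ),
      ENNReal.ofReal ((2 * Real.pi * ‖G 0‖ ^ 2) * (r * Real.exp (-α * r ^ 2)))
        ≤ ∫⁻ θ in Ioo (-Real.pi) Real.pi,
            ENNReal.ofReal r * ENNReal.ofReal (D (Complex.polarCoord.symm (r, θ))) := by
    intro r hr
    have hr' : (0:ℝ) < r := hr
    have habs : ∀ θ : ℝ, ENNReal.ofReal r * ENNReal.ofReal (D (Complex.polarCoord.symm (r, θ)))
        = ENNReal.ofReal (r * Real.exp (-α * r ^ 2))
            * ENNReal.ofReal (‖G (Complex.polarCoord.symm (r, θ))‖ ^ 2) := by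
      intro θ
      have hn : ‖Complex.polarCoord.symm (r, θ)‖ = r := by
        rw [Complex.norm_polarCoord_symm, abs_of_pos hr']
      rw [← ENNReal.ofReal_mul hr'.le, ← ENNReal.ofReal_mul (by positivity), hD]
      simp only [hn]
      congr 1
      ring
    have hint : IntegrableOn (fun θ : ℝ => ‖G (Complex.polarCoord.symm (r, θ))‖ ^ 2)
        (Ioo (-Real.pi) Real.pi) := by
      have hc : Continuous fun θ : ℝ => ‖G (Complex.polarCoord.symm (r, θ))‖ ^ 2 :=
        (hG.continuous.norm.pow 2).comp (hsymm.comp (by fun_prop))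
      exact hc.integrableOn_Icc.mono_set Ioo_subset_Icc_self
    calc ENNReal.ofReal ((2 * Real.pi * ‖G 0‖ ^ 2) * (r * Real.exp (-α * r ^ 2)))
        = ENNReal.ofReal (r * Real.exp (-α * r ^ 2))
            * ENNReal.ofReal (2 * Real.pi * ‖G 0‖ ^ 2) := by
          rw [← ENNReal.ofReal_mul (by positivity)]
          ring_nf
      _ ≤ ENNReal.ofReal (r * Real.exp (-α * r ^ 2))
            * ENNReal.ofReal (∫ θ in Ioo (-Real.pi) Real.pi,
                ‖G (Complex.polarCoord.symm (r, θ))‖ ^ 2) := by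
          gcongr
          exact RBF.realMV G hG hr'
      _ ≤ ENNReal.ofReal (r * Real.exp (-α * r ^ 2))
            * ∫⁻ θ in Ioo (-Real.pi) Real.pi,
                ENNReal.ofReal (‖G (Complex.polarCoord.symm (r, θ))‖ ^ 2) := by
          gcongr
          exact le_of_eq (ofReal_integral_eq_lintegral_ofReal hint
            (Filter.Eventually.of_forall fun θ => by positivity))
      _ = ∫⁻ θ in Ioo (-Real.pi) Real.pi,
            ENNReal.ofReal r * ENNReal.ofReal (D (Complex.polarCoord.symm (r, θ))) := by
          rw [← lintegral_const_mul' _ _ ENNReal.ofReal_ne_top]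
          refine lintegral_congr fun θ => ?_
          rw [habs θ]
  have hIoi : (∫⁻ r in Ioi (0:ℝ),
        ENNReal.ofReal ((2 * Real.pi * ‖G 0‖ ^ 2) * (r * Real.exp (-α * r ^ 2))))
      = ENNReal.ofReal (Real.pi / α * ‖G 0‖ ^ 2) := by
    have hnn : (0:ℝ) ≤ 2 * Real.pi * ‖G 0‖ ^ 2 := by positivity
    simp_rw [ENNReal.ofReal_mul hnn]
    rw [lintegral_const_mul' _ _ ENNReal.ofReal_ne_top,
      ← ofReal_integral_eq_lintegral_ofReal (integrable_mul_exp_neg_mul_sq hα).integrableOn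
        ((ae_restrict_iff' measurableSet_Ioi).2 (Filter.Eventually.of_forall
          fun r hr => mul_nonneg (le_of_lt hr) (Real.exp_pos _).le)),
      RBF.integral_id_mul_exp_neg_mul_sq hα, ← ENNReal.ofReal_mul hnn]
    congr 1
    have : α ≠ 0 := ne_of_gt hα
    field_simp
  rw [← RBF.lintegral_comp_complex_polarCoord_symm (fun w => ENNReal.ofReal (D w)),
    polarCoord_target, Measure.volume_eq_prod, ← Measure.prod_restrict,
    lintegral_prod _ hmeas.aemeasurable]
  refine le_trans (le_of_eq hIoi.symm) (setLIntegral_mono ?_ key)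
  exact Measurable.lintegral_prod_right hmeas

end auxiliary

theorem rbf_estimate (γ : ℝ) (hγ : 0 < γ) (f : ℂ → ℂ)
    (hf : Differentiable ℂ f)
    (hf2 : (∫⁻ z : ℂ, ENNReal.ofReal (rbfDensity γ f z)) < ⊤) :
    (∀ z : ℂ, ‖f z‖ ≤ Real.exp (2 * z.im ^ 2 / γ ^ 2) * rbfNorm γ f) ∧
    (∀ x : ℝ, ‖f (x : ℂ)‖ ≤ rbfNorm γ f) := by
  have hγ2 : (0:ℝ) < γ ^ 2 := by positivity
  set α : ℝ := 2 / γ ^ 2 with hα_def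
  have hα : 0 < α := by positivity
  set L : ℝ≥0∞ := ∫⁻ z : ℂ, ENNReal.ofReal (rbfDensity γ f z) with hL
  have hLne : L ≠ ⊤ := ne_of_lt hf2
  -- abbreviation for the unweighted density
  set J : ℝ≥0∞ := ∫⁻ u : ℂ, ENNReal.ofReal (‖f u‖ ^ 2 * Real.exp (-(4 * u.im ^ 2) / γ ^ 2))
    with hJ
  have hLJ : L = ENNReal.ofReal (2 / (Real.pi * γ ^ 2)) * J := by
    rw [hL, hJ, ← lintegral_const_mul' _ _ ENNReal.ofReal_ne_top]
    refine lintegral_congr fun u => ?_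
    rw [← ENNReal.ofReal_mul (by positivity)]
    congr 1
    rw [rbfDensity]
    ring
  have main : ∀ z : ℂ, ‖f z‖ ^ 2 * Real.exp (-(4 * z.im ^ 2) / γ ^ 2) ≤ L.toReal := by
    intro z
    set E : ℂ → ℂ := fun w => (γ ^ 2 : ℝ)⁻¹ •
      ((z + w) ^ 2 - 2 * w * (starRingEnd ℂ) z - (Complex.normSq z : ℂ)) with hE
    set G : ℂ → ℂ := fun w => f (z + w) * Complex.exp (E w) with hG
    have hGdiff : Differentiable ℂ G := by
      apply Differentiable.mul
      · exact hf.comp (differentiable_id.const_add z)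
      · apply Complex.differentiable_exp.comp
        rw [hE]
        fun_prop
    have hRe : ∀ w : ℂ, 2 * (E w).re - α * ‖w‖ ^ 2 = -(4 * (z + w).im ^ 2) / γ ^ 2 := by
      intro w
      have h2 : ((z + w) ^ 2 - 2 * w * (starRingEnd ℂ) z - (Complex.normSq z : ℂ)).re
          = (z.re + w.re) ^ 2 - (z.im + w.im) ^ 2 - 2 * (w.re * z.re + w.im * z.im)
            - (z.re ^ 2 + z.im ^ 2) := by
        simp [Complex.normSq_apply, pow_two, Complex.mul_re, Complex.add_re, Complex.add_im,
          Complex.sub_re, Complex.conj_re, Complex.conj_im]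
        ring
      have hw : ‖w‖ ^ 2 = w.re ^ 2 + w.im ^ 2 := by
        rw [Complex.sq_norm, Complex.normSq_apply]
        ring
      rw [hE]
      simp only [Complex.smul_re, smul_eq_mul, h2, hw, Complex.add_im, hα_def]
      field_simp
      ring
    have hDG : ∀ w : ℂ, ‖G w‖ ^ 2 * Real.exp (-α * ‖w‖ ^ 2)
        = ‖f (z + w)‖ ^ 2 * Real.exp (-(4 * (z + w).im ^ 2) / γ ^ 2) := by
      intro w
      have hne : ‖G w‖ = ‖f (z + w)‖ * Real.exp (E w).re := by
        rw [hG]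
        simp [norm_mul, Complex.norm_exp]
      rw [hne, ← hRe w, mul_pow, ← Real.exp_nat_mul]
      rw [mul_assoc, ← Real.exp_add]
      congr 1
      push_cast
      ring_nf
    have fock := RBF.fockBound α hα G hGdiff
    have htrans : (∫⁻ w : ℂ, ENNReal.ofReal (‖G w‖ ^ 2 * Real.exp (-α * ‖w‖ ^ 2))) = J := by
      calc (∫⁻ w : ℂ, ENNReal.ofReal (‖G w‖ ^ 2 * Real.exp (-α * ‖w‖ ^ 2)))
          = ∫⁻ w : ℂ, ENNReal.ofReal
              (‖f (z + w)‖ ^ 2 * Real.exp (-(4 * (z + w).im ^ 2) / γ ^ 2)) := by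
            refine lintegral_congr fun w => ?_
            rw [hDG w]
        _ = J := by
            rw [hJ]
            exact lintegral_add_left_eq_self
              (fun u : ℂ => ENNReal.ofReal (‖f u‖ ^ 2 * Real.exp (-(4 * u.im ^ 2) / γ ^ 2))) z
    rw [htrans] at fock
    have hG0 : ‖G 0‖ ^ 2 = ‖f z‖ ^ 2 * Real.exp (-(4 * z.im ^ 2) / γ ^ 2) := by
      have := hDG 0
      simpa using this
    -- fock : ofReal (π / α * ‖G 0‖ ^ 2) ≤ J
    have hXL : ENNReal.ofReal (‖f z‖ ^ 2 * Real.exp (-(4 * z.im ^ 2) / γ ^ 2)) ≤ L := by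
      have hc : (0:ℝ) < 2 / (Real.pi * γ ^ 2) := by positivity
      have step : ENNReal.ofReal (2 / (Real.pi * γ ^ 2))
            * ENNReal.ofReal (Real.pi / α * ‖G 0‖ ^ 2)
          ≤ ENNReal.ofReal (2 / (Real.pi * γ ^ 2)) * J := by
        gcongr
      rw [hLJ]
      refine le_trans (le_of_eq ?_) step
      rw [← ENNReal.ofReal_mul hc.le, hG0]
      congr 1
      have hπ : Real.pi ≠ 0 := Real.pi_ne_zero
      have hα0 : α ≠ 0 := ne_of_gt hα
      have hγ0 : γ ≠ 0 := ne_of_gt hγ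
      rw [hα_def]
      field_simp
    have := ENNReal.toReal_mono hLne hXL
    rwa [ENNReal.toReal_ofReal (by positivity)] at this
  have hNsq : rbfNorm γ f = Real.sqrt L.toReal := rfl
  have part1 : ∀ z : ℂ, ‖f z‖ ≤ Real.exp (2 * z.im ^ 2 / γ ^ 2) * rbfNorm γ f := by
    intro z
    have hexp : Real.exp (-(4 * z.im ^ 2) / γ ^ 2)
        = (Real.exp (2 * z.im ^ 2 / γ ^ 2))⁻¹ ^ 2 := by
      rw [← Real.exp_neg, ← Real.exp_nat_mul]
      congr 1
      push_cast
      ring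
    have h1 : ‖f z‖ ^ 2 ≤ (Real.exp (2 * z.im ^ 2 / γ ^ 2) * Real.sqrt L.toReal) ^ 2 := by
      have hm := main z
      rw [hexp] at hm
      have he : (0:ℝ) < Real.exp (2 * z.im ^ 2 / γ ^ 2) := Real.exp_pos _
      have hLt : (0:ℝ) ≤ L.toReal := ENNReal.toReal_nonneg
      rw [mul_pow, Real.sq_sqrt hLt]
      calc ‖f z‖ ^ 2 = (‖f z‖ ^ 2 * (Real.exp (2 * z.im ^ 2 / γ ^ 2))⁻¹ ^ 2)
            * Real.exp (2 * z.im ^ 2 / γ ^ 2) ^ 2 := by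
            field_simp
        _ ≤ L.toReal * Real.exp (2 * z.im ^ 2 / γ ^ 2) ^ 2 := by
            gcongr
        _ = Real.exp (2 * z.im ^ 2 / γ ^ 2) ^ 2 * L.toReal := by ring
    have h2 := Real.sqrt_le_sqrt h1
    rw [Real.sqrt_sq (norm_nonneg _), Real.sqrt_sq (by positivity)] at h2
    rw [hNsq]
    exact h2
  refine ⟨part1, fun x => ?_⟩
  have := part1 (x : ℂ)
  simpa using this
end

section
/- Let γ > 0. For all z, w ∈ ℂ one has ∫_ℝ exp(−(x − √2·conj(z))²/γ²) · exp(−(x − √2·w)²/γ²) dx = γ·√(π/2) · K_γ(w,z). In particular, for every z ∈ ℂ, ∫_ℝ |exp(−(x − √2·z)²/γ²)|² dx = γ·√(π/2) · exp(−(z − conj(z))²/γ²), so the L²(ℝ)-norm of x ↦ exp(−(x − √2·z)²/γ²) equals √(γ·√(π/2)) · exp(−(z − conj(z))²/(2γ²)). -/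
open MeasureTheory Complex

theorem rbf_feature_map_inner (γ : ℝ) (hγ : 0 < γ) :
    (∀ z w : ℂ,
      ∫ x : ℝ,
          Complex.exp (-((x : ℂ) - (Real.sqrt 2 : ℂ) * (starRingEnd ℂ) z) ^ 2 / (γ : ℂ) ^ 2) *
            Complex.exp (-((x : ℂ) - (Real.sqrt 2 : ℂ) * w) ^ 2 / (γ : ℂ) ^ 2) =
        ((γ * Real.sqrt (Real.pi / 2) : ℝ) : ℂ) * rbfKernel γ w z) ∧
    (∀ z : ℂ,
      ∫ x : ℝ,
          ‖Complex.exp (-((x : ℂ) - (Real.sqrt 2 : ℂ) * z) ^ 2 / (γ : ℂ) ^ 2)‖ ^ 2 =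
        γ * Real.sqrt (Real.pi / 2) * Real.exp (4 * z.im ^ 2 / γ ^ 2)) ∧
    (∀ z : ℂ,
      Real.sqrt (∫ x : ℝ,
          ‖Complex.exp (-((x : ℂ) - (Real.sqrt 2 : ℂ) * z) ^ 2 / (γ : ℂ) ^ 2)‖ ^ 2) =
        Real.sqrt (γ * Real.sqrt (Real.pi / 2)) * Real.exp (2 * z.im ^ 2 / γ ^ 2)) := by
  have hγ0 : (γ : ℂ) ≠ 0 := by exact_mod_cast hγ.ne'
  have hs2 : Real.sqrt 2 ^ 2 = 2 := Real.sq_sqrt (by norm_num)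
  have hs2c : ((Real.sqrt 2 : ℝ) : ℂ) ^ 2 = 2 := by
    rw [← Complex.ofReal_pow, hs2]; norm_num
  have key : ∀ z w : ℂ,
      (∫ x : ℝ,
          Complex.exp (-((x : ℂ) - (Real.sqrt 2 : ℂ) * (starRingEnd ℂ) z) ^ 2 / (γ : ℂ) ^ 2) *
            Complex.exp (-((x : ℂ) - (Real.sqrt 2 : ℂ) * w) ^ 2 / (γ : ℂ) ^ 2)) =
        ((γ * Real.sqrt (Real.pi / 2) : ℝ) : ℂ) * rbfKernel γ w z := by
    intro z w
    set a : ℂ := (Real.sqrt 2 : ℂ) * (starRingEnd ℂ) z with ha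
    set b : ℂ := (Real.sqrt 2 : ℂ) * w with hb
    have hbre : ((-2 / (γ : ℂ) ^ 2)).re < 0 := by
      have : ((-2 / (γ : ℂ) ^ 2)) = ((-2 / γ ^ 2 : ℝ) : ℂ) := by push_cast; ring
      rw [this, Complex.ofReal_re]
      have h2 : (0:ℝ) < γ ^ 2 := by positivity
      exact div_neg_of_neg_of_pos (by norm_num) h2
    have heq : ∀ x : ℝ,
        Complex.exp (-((x : ℂ) - a) ^ 2 / (γ : ℂ) ^ 2) *
          Complex.exp (-((x : ℂ) - b) ^ 2 / (γ : ℂ) ^ 2) =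
        Complex.exp ((-2 / (γ : ℂ) ^ 2) * (x:ℂ) ^ 2 + (2 * (a + b) / (γ:ℂ) ^ 2) * (x:ℂ)
          + (-(a ^ 2 + b ^ 2) / (γ:ℂ) ^ 2)) := by
      intro x
      rw [← Complex.exp_add]
      congr 1
      field_simp
      ring
    simp_rw [heq]
    rw [integral_cexp_quadratic hbre]
    have h1 : ((Real.pi : ℂ) / -(-2 / (γ : ℂ) ^ 2)) ^ (1 / 2 : ℂ) =
        ((γ * Real.sqrt (Real.pi / 2) : ℝ) : ℂ) := by
      have e1 : ((Real.pi : ℂ) / -(-2 / (γ : ℂ) ^ 2)) = ((Real.pi / 2 * γ ^ 2 : ℝ) : ℂ) := by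
        push_cast
        field_simp
      rw [e1]
      have hpos : (0:ℝ) ≤ Real.pi / 2 * γ ^ 2 := by positivity
      have e2 : ((1/2 : ℂ)) = ((1/2 : ℝ) : ℂ) := by norm_num
      rw [e2, ← Complex.ofReal_cpow hpos]
      congr 1
      rw [← Real.sqrt_eq_rpow, Real.sqrt_mul (by positivity), Real.sqrt_sq hγ.le, mul_comm]
    have h2 : Complex.exp ((-(a ^ 2 + b ^ 2) / (γ:ℂ) ^ 2) -
        (2 * (a + b) / (γ:ℂ) ^ 2) ^ 2 / (4 * (-2 / (γ : ℂ) ^ 2))) = rbfKernel γ w z := by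
      unfold rbfKernel
      congr 1
      rw [ha, hb]
      have hγ2 : ((γ:ℂ)) ^ 2 ≠ 0 := pow_ne_zero 2 hγ0
      field_simp
      linear_combination
        (-2 * ((starRingEnd ℂ) z - w) ^ 2) * hs2c
    rw [h1, h2]
  have part2 : ∀ z : ℂ,
      ∫ x : ℝ,
          ‖Complex.exp (-((x : ℂ) - (Real.sqrt 2 : ℂ) * z) ^ 2 / (γ : ℂ) ^ 2)‖ ^ 2 =
        γ * Real.sqrt (Real.pi / 2) * Real.exp (4 * z.im ^ 2 / γ ^ 2) := by
    intro z
    -- second part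
    have hconj : ∀ x : ℝ,
        Complex.exp (-((x : ℂ) - (Real.sqrt 2 : ℂ) * (starRingEnd ℂ) z) ^ 2 / (γ : ℂ) ^ 2) =
        (starRingEnd ℂ)
          (Complex.exp (-((x : ℂ) - (Real.sqrt 2 : ℂ) * z) ^ 2 / (γ : ℂ) ^ 2)) := by
      intro x
      rw [← Complex.exp_conj]
      congr 1
      simp [map_div₀, Complex.conj_ofReal]
    have hk := key z z
    have hint : ∀ x : ℝ,
        Complex.exp (-((x : ℂ) - (Real.sqrt 2 : ℂ) * (starRingEnd ℂ) z) ^ 2 / (γ : ℂ) ^ 2) *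
          Complex.exp (-((x : ℂ) - (Real.sqrt 2 : ℂ) * z) ^ 2 / (γ : ℂ) ^ 2) =
        ((‖Complex.exp (-((x : ℂ) - (Real.sqrt 2 : ℂ) * z) ^ 2 / (γ : ℂ) ^ 2)‖ ^ 2 : ℝ) : ℂ) := by
      intro x
      rw [hconj x]
      rw [Complex.conj_mul']
      push_cast
      ring
    rw [show (∫ x : ℝ,
        Complex.exp (-((x : ℂ) - (Real.sqrt 2 : ℂ) * (starRingEnd ℂ) z) ^ 2 / (γ : ℂ) ^ 2) *
          Complex.exp (-((x : ℂ) - (Real.sqrt 2 : ℂ) * z) ^ 2 / (γ : ℂ) ^ 2)) =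
        ∫ x : ℝ, ((‖Complex.exp (-((x : ℂ) - (Real.sqrt 2 : ℂ) * z) ^ 2 / (γ : ℂ) ^ 2)‖ ^ 2 : ℝ)
          : ℂ) from by simp_rw [hint]] at hk
    have hcast : (∫ x : ℝ,
        ((‖Complex.exp (-((x:ℂ) - (Real.sqrt 2 : ℂ) * z) ^ 2 / (γ:ℂ) ^ 2)‖ ^ 2 : ℝ) : ℂ)) =
        ((∫ x : ℝ, ‖Complex.exp (-((x:ℂ) - (Real.sqrt 2 : ℂ) * z) ^ 2 / (γ:ℂ) ^ 2)‖ ^ 2 : ℝ) : ℂ)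
        := integral_ofReal
    rw [hcast] at hk
    have hrbf : rbfKernel γ z z = ((Real.exp (4 * z.im ^ 2 / γ ^ 2) : ℝ) : ℂ) := by
      unfold rbfKernel
      rw [Complex.ofReal_exp]
      congr 1
      rw [Complex.sub_conj]
      have hγ2 : ((γ:ℂ)) ^ 2 ≠ 0 := pow_ne_zero 2 hγ0
      push_cast
      field_simp
      linear_combination (-(4 * (z.im:ℂ) ^ 2)) * Complex.I_sq
    rw [hrbf, ← Complex.ofReal_mul] at hk
    exact Complex.ofReal_injective hk
  refine ⟨key, part2, ?_⟩
  intro z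
  rw [part2 z, Real.sqrt_mul (by positivity), ← Real.exp_half]
  congr 1
  ring_nf
end
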